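/- Suppose ℳ ⊆ 𝒫 is nonempty, compact, s-rectangular, and all its parameters (C,P) satisfy P s a ∈ Δ_S for all s, a. Then ℳ satisfies the containment condition with respect to the Bellman operator f and with respect to the policy evaluation operator g^π for every policy π: for every V ∈ ℝ^S there exist parameters m̲, m̄ ∈ ℳ such that f_s(V, m̲) = inf_{m ∈ ℳ} f_s(V, m) simultaneously for every s ∈ Fin S, and f_s(V, m̄) = sup_{m ∈ ℳ} f_s(V, m) simultaneously for every s ∈ Fin S (and likewise with f replaced by g^π). -/

import Mathlib

/-- The space of MDP parameters `(C, P)`. -/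
abbrev Param (S A : ℕ) := (Fin S → Fin A → ℝ) × (Fin S → Fin A → Fin S → ℝ)

/-- The probability simplex over `Fin k`. -/
def simplex (k : ℕ) : Set (Fin k → ℝ) := {p | (∀ i, 0 ≤ p i) ∧ ∑ i, p i = 1}

/-- The Bellman operator. -/
noncomputable def bellman (S A : ℕ) (γ : ℝ) (V : Fin S → ℝ) (m : Param S A) :
    Fin S → ℝ :=
  fun s => ⨅ a : Fin A, (m.1 s a + γ * ∑ s', m.2 s a s' * V s')

/-- The policy evaluation operator. -/
noncomputable def polEval (S A : ℕ) (γ : ℝ) (π : Fin S → Fin A → ℝ)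
    (V : Fin S → ℝ) (m : Param S A) : Fin S → ℝ :=
  fun s => ∑ a, π s a * (m.1 s a + γ * ∑ s', m.2 s a s' * V s')

/-- Auxiliary: for a rowwise, continuous objective, a rectangular compact set contains a
simultaneous minimizer and maximizer. -/
lemma containment_aux (S A : ℕ)
    (M : Set (Param S A)) (hMne : M.Nonempty) (hMcp : IsCompact M)
    (Ms : Fin S → Set ((Fin A → ℝ) × (Fin A → Fin S → ℝ)))
    (hrect : ∀ m : Param S A, m ∈ M ↔ ∀ s, (m.1 s, m.2 s) ∈ Ms s)
    (F : Param S A → Fin S → ℝ)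
    (hF : ∀ s, Continuous (fun m => F m s))
    (hrow : ∀ m m' : Param S A, ∀ s, m.1 s = m'.1 s → m.2 s = m'.2 s → F m s = F m' s) :
    (∃ ml ∈ M, ∀ s, F ml s = sInf ((fun m => F m s) '' M)) ∧
    (∃ mu ∈ M, ∀ s, F mu s = sSup ((fun m => F m s) '' M)) := by
  have hmin : ∀ s : Fin S, ∃ x ∈ M, ∀ y ∈ M, F x s ≤ F y s := by
    intro s
    obtain ⟨x, hx, hmin⟩ := hMcp.exists_isMinOn hMne (hF s).continuousOn
    exact ⟨x, hx, fun y hy => hmin hy⟩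
  have hmax : ∀ s : Fin S, ∃ x ∈ M, ∀ y ∈ M, F y s ≤ F x s := by
    intro s
    obtain ⟨x, hx, hmax⟩ := hMcp.exists_isMaxOn hMne (hF s).continuousOn
    exact ⟨x, hx, fun y hy => hmax hy⟩
  choose cl hclM hcl using hmin
  choose cu hcuM hcu using hmax
  refine ⟨⟨(fun s => cl s |>.1 s, fun s => cl s |>.2 s), ?_, ?_⟩,
          ⟨(fun s => cu s |>.1 s, fun s => cu s |>.2 s), ?_, ?_⟩⟩
  · exact (hrect _).2 fun s => (hrect (cl s)).1 (hclM s) s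
  · intro s
    have he : F (fun s => cl s |>.1 s, fun s => cl s |>.2 s) s = F (cl s) s :=
      hrow _ _ s rfl rfl
    rw [he]
    have : IsLeast ((fun m => F m s) '' M) (F (cl s) s) :=
      ⟨⟨cl s, hclM s, rfl⟩, by rintro _ ⟨y, hy, rfl⟩; exact hcl s y hy⟩
    exact this.csInf_eq.symm
  · exact (hrect _).2 fun s => (hrect (cu s)).1 (hcuM s) s
  · intro s
    have he : F (fun s => cu s |>.1 s, fun s => cu s |>.2 s) s = F (cu s) s :=
      hrow _ _ s rfl rfl
    rw [he]
    have : IsGreatest ((fun m => F m s) '' M) (F (cu s) s) :=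
      ⟨⟨cu s, hcuM s, rfl⟩, by rintro _ ⟨y, hy, rfl⟩; exact hcu s y hy⟩
    exact this.csSup_eq.symm

lemma qval_continuous (S A : ℕ) (γ : ℝ) (V : Fin S → ℝ) (s : Fin S) (a : Fin A) :
    Continuous (fun m : Param S A => m.1 s a + γ * ∑ s', m.2 s a s' * V s') := by
  apply Continuous.add
  · exact (continuous_apply a).comp ((continuous_apply s).comp continuous_fst)
  · apply continuous_const.mul
    apply continuous_finset_sum
    intro s' _
    exact (by fun_prop : Continuous fun m : Param S A => m.2 s a s' * V s')

/-- a nonempty, compact, s-rectangular parameter set `ℳ` (with rows in the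
simplex) satisfies the containment condition with respect to the Bellman operator and
with respect to every policy evaluation operator. -/
theorem sRectangular_satisfies_containment (S A : ℕ) (hS : 0 < S) (hA : 0 < A)
    (γ : ℝ) (hγ0 : 0 < γ) (hγ1 : γ < 1)
    (M : Set (Param S A)) (hMne : M.Nonempty) (hMcp : IsCompact M)
    (hMrow : ∀ m ∈ M, ∀ s a, m.2 s a ∈ simplex S)
    (hrect : ∃ Ms : Fin S → Set ((Fin A → ℝ) × (Fin A → Fin S → ℝ)),
      ∀ m : Param S A, m ∈ M ↔ ∀ s, (m.1 s, m.2 s) ∈ Ms s) :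
    (∀ V : Fin S → ℝ,
      (∃ ml ∈ M, ∀ s, bellman S A γ V ml s
          = sInf ((fun m => bellman S A γ V m s) '' M)) ∧
      (∃ mu ∈ M, ∀ s, bellman S A γ V mu s
          = sSup ((fun m => bellman S A γ V m s) '' M))) ∧
    (∀ π : Fin S → Fin A → ℝ, (∀ s, π s ∈ simplex A) →
      ∀ V : Fin S → ℝ,
      (∃ ml ∈ M, ∀ s, polEval S A γ π V ml s
          = sInf ((fun m => polEval S A γ π V m s) '' M)) ∧
      (∃ mu ∈ M, ∀ s, polEval S A γ π V mu s
          = sSup ((fun m => polEval S A γ π V m s) '' M))) := by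
  obtain ⟨Ms, hrect⟩ := hrect
  haveI : Nonempty (Fin A) := ⟨⟨0, hA⟩⟩
  constructor
  · intro V
    apply containment_aux S A M hMne hMcp Ms hrect
    · intro s
      have hb : ∀ m : Param S A, bellman S A γ V m s =
          Finset.univ.inf' Finset.univ_nonempty
            (fun a => m.1 s a + γ * ∑ s', m.2 s a s' * V s') := by
        intro m
        rw [Finset.inf'_univ_eq_ciInf]
        rfl
      simp only [hb]
      exact continuous_iff_continuousAt.2 fun x =>
        ContinuousAt.finset_inf'_apply Finset.univ_nonempty
          (fun a _ => (qval_continuous S A γ V s a).continuousAt)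
    · intro m m' s h1 h2
      simp only [bellman, h1, h2]
  · intro π hπ V
    apply containment_aux S A M hMne hMcp Ms hrect
    · intro s
      apply continuous_finset_sum
      intro a _
      exact continuous_const.mul (qval_continuous S A γ V s a)
    · intro m m' s h1 h2
      simp only [polEval, h1, h2]
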